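/- Let n ≥ 1, let 1 ≤ i_1 < i_2 < … < i_k ≤ n with k ≥ 2, and let σ be the permutation of {1,…,n} with σ(i_l) = i_{l+1} for 1 ≤ l < k, σ(i_k) = i_1, and σ(m) = m for all m ∉ {i_1,…,i_k}. Then Des(σ) = {i_l : 1 ≤ l < k and i_l + 1 < i_{l+1}} ∪ {i_k − 1} and Des(σ^{−1}) = {i_l − 1 : 1 < l ≤ k and i_{l−1} + 1 < i_l} ∪ {i_1}. -/

import Mathlib

open scoped Classical

namespace Stmt

/-- Number of inversions of a permutation of `{1,…,n}`. -/
def invP {n : ℕ} (σ : Equiv.Perm (Fin n)) : ℕ :=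
  (Finset.univ.filter (fun p : Fin n × Fin n => p.1 < p.2 ∧ σ p.2 < σ p.1)).card

/-- Descent set of a permutation, as 1-indexed positions in `{1,…,n-1}`. -/
def permDes {n : ℕ} (σ : Equiv.Perm (Fin n)) : Finset ℕ :=
  (Finset.Ico 1 n).filter (fun i =>
    ∃ h : i < n, σ ⟨i, h⟩ < σ ⟨i - 1, Nat.lt_of_le_of_lt (Nat.sub_le i 1) h⟩)

def desP {n : ℕ} (σ : Equiv.Perm (Fin n)) : ℕ := (permDes σ).card

def majP {n : ℕ} (σ : Equiv.Perm (Fin n)) : ℕ := ∑ i ∈ permDes σ, i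

def imajP {n : ℕ} (σ : Equiv.Perm (Fin n)) : ℕ := majP σ⁻¹

/-- Descent sets of a single increasing cycle `(i_1, …, i_k)` and of its
inverse: `Des(σ) = {i_l : l < k, i_l + 1 < i_{l+1}} ∪ {i_k - 1}` and
`Des(σ⁻¹) = {i_l - 1 : 1 < l ≤ k, i_{l-1} + 1 < i_l} ∪ {i_1}`.
Here `b : Fin k → Fin n` is the `0`-indexed cycle, so the `1`-indexed entry
`i_{l+1}` corresponds to `(b l : ℕ) + 1`. -/
theorem des_of_increasing_cycle (n k : ℕ) (hn : 1 ≤ n) (hk : 2 ≤ k)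
    (b : Fin k → Fin n) (hmono : StrictMono b) (σ : Equiv.Perm (Fin n))
    (hcyc : ∀ (l : ℕ) (h : l + 1 < k),
      σ (b ⟨l, Nat.lt_of_succ_lt h⟩) = b ⟨l + 1, h⟩)
    (hlast : σ (b ⟨k - 1, by omega⟩) = b ⟨0, by omega⟩)
    (hfix : ∀ m : Fin n, (∀ l : Fin k, b l ≠ m) → σ m = m) :
    (∀ i : ℕ, i ∈ permDes σ ↔
        ((∃ (l : ℕ) (h : l + 1 < k),
            i = (b ⟨l, Nat.lt_of_succ_lt h⟩ : ℕ) + 1 ∧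
            (b ⟨l, Nat.lt_of_succ_lt h⟩ : ℕ) + 1 < (b ⟨l + 1, h⟩ : ℕ)) ∨
          i = (b ⟨k - 1, by omega⟩ : ℕ))) ∧
    (∀ i : ℕ, i ∈ permDes σ⁻¹ ↔
        ((∃ (l : ℕ) (h : l + 1 < k),
            i = (b ⟨l + 1, h⟩ : ℕ) ∧
            (b ⟨l, Nat.lt_of_succ_lt h⟩ : ℕ) + 1 < (b ⟨l + 1, h⟩ : ℕ)) ∨
          i = (b ⟨0, by omega⟩ : ℕ) + 1)) := by
  classical
  have h0k : 0 < k := by omega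
  have hk1 : k - 1 < k := by omega
  have hb : ∀ l l' : Fin k, (l : ℕ) < (l' : ℕ) → (b l : ℕ) < (b l' : ℕ) := by
    intro l l' h
    exact hmono (show l < l' from h)
  have hble : ∀ l l' : Fin k, (l : ℕ) ≤ (l' : ℕ) → (b l : ℕ) ≤ (b l' : ℕ) := by
    intro l l' h
    rcases Nat.eq_or_lt_of_le h with h' | h'
    · have : l = l' := Fin.ext h'
      rw [this]
    · exact le_of_lt (hb _ _ h')
  have hcyc' : ∀ (l : ℕ) (h : l + 1 < k),
      σ⁻¹ (b ⟨l + 1, h⟩) = b ⟨l, Nat.lt_of_succ_lt h⟩ := by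
    intro l h
    rw [← hcyc l h]; exact σ.symm_apply_apply _
  have hlast' : σ⁻¹ (b ⟨0, h0k⟩) = b ⟨k - 1, hk1⟩ := by
    rw [← hlast]; exact σ.symm_apply_apply _
  have hfix' : ∀ m : Fin n, (∀ l : Fin k, b l ≠ m) → σ⁻¹ m = m := by
    intro m hm
    conv_lhs => rw [← hfix m hm]
    exact σ.symm_apply_apply m
  have hmem : ∀ (τ : Equiv.Perm (Fin n)) (i : ℕ), i ∈ permDes τ ↔
      (1 ≤ i ∧ ∃ h : i < n,
        τ ⟨i, h⟩ < τ ⟨i - 1, Nat.lt_of_le_of_lt (Nat.sub_le i 1) h⟩) := by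
    intro τ i
    simp only [permDes, Finset.mem_filter, Finset.mem_Ico]
    constructor
    · rintro ⟨⟨h1, h2⟩, h3⟩; exact ⟨h1, h3⟩
    · rintro ⟨h1, h2, h3⟩; exact ⟨⟨h1, h2⟩, h2, h3⟩
  constructor
  · -- descents of σ
    intro i
    rw [hmem]
    constructor
    · rintro ⟨hi1, hi2, hd⟩
      have hdv : ((σ (⟨i, hi2⟩ : Fin n)) : ℕ) <
          ((σ (⟨i - 1, Nat.lt_of_le_of_lt (Nat.sub_le i 1) hi2⟩ : Fin n)) : ℕ) := hd
      by_cases hx : ∃ l : Fin k,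
          b l = (⟨i - 1, Nat.lt_of_le_of_lt (Nat.sub_le i 1) hi2⟩ : Fin n)
      · obtain ⟨l, hl⟩ := hx
        have hlv : (b l : ℕ) = i - 1 := congrArg Fin.val hl
        by_cases hl1 : (l : ℕ) + 1 < k
        · have eqX : σ (⟨i - 1, Nat.lt_of_le_of_lt (Nat.sub_le i 1) hi2⟩ : Fin n)
              = b ⟨(l : ℕ) + 1, hl1⟩ := by
            rw [← hl]; exact hcyc (l : ℕ) hl1
          rw [eqX] at hdv
          by_cases hy : ∃ l' : Fin k, b l' = (⟨i, hi2⟩ : Fin n)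
          · obtain ⟨l', hl'⟩ := hy
            have hlv' : (b l' : ℕ) = i := congrArg Fin.val hl'
            have hlt : (l : ℕ) < (l' : ℕ) := by
              by_contra hc
              have := hble l' l (by omega)
              omega
            by_cases hl2 : (l' : ℕ) + 1 < k
            · exfalso
              have eqY : σ (⟨i, hi2⟩ : Fin n) = b ⟨(l' : ℕ) + 1, hl2⟩ := by
                rw [← hl']; exact hcyc (l' : ℕ) hl2
              rw [eqY] at hdv
              have := hb ⟨(l : ℕ) + 1, hl1⟩ ⟨(l' : ℕ) + 1, hl2⟩ (show (l:ℕ)+1 < (l':ℕ)+1 by omega)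
              omega
            · right
              show i = (b ⟨k - 1, hk1⟩ : ℕ)
              have hv : l' = ⟨k - 1, hk1⟩ := Fin.ext (show (l':ℕ) = k - 1 by have := l'.isLt; omega)
              rw [← hv]
              omega
          · push_neg at hy
            have eqY := hfix _ hy
            rw [eqY] at hdv
            have hdv' : i < (b ⟨(l : ℕ) + 1, hl1⟩ : ℕ) := hdv
            left
            refine ⟨(l : ℕ), hl1, ?_, ?_⟩
            · show i = (b ⟨(l : ℕ), Nat.lt_of_succ_lt hl1⟩ : ℕ) + 1
              have hv : l = ⟨(l : ℕ), Nat.lt_of_succ_lt hl1⟩ := Fin.ext rfl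
              rw [← hv]
              omega
            · show (b ⟨(l : ℕ), Nat.lt_of_succ_lt hl1⟩ : ℕ) + 1 < (b ⟨(l : ℕ) + 1, hl1⟩ : ℕ)
              have hv : l = ⟨(l : ℕ), Nat.lt_of_succ_lt hl1⟩ := Fin.ext rfl
              rw [← hv]
              omega
        · exfalso
          have hlK : l = ⟨k - 1, hk1⟩ := Fin.ext (show (l:ℕ) = k - 1 by have := l.isLt; omega)
          have eqX : σ (⟨i - 1, Nat.lt_of_le_of_lt (Nat.sub_le i 1) hi2⟩ : Fin n)
              = b ⟨0, h0k⟩ := by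
            rw [← hl, hlK]; exact hlast
          rw [eqX] at hdv
          by_cases hy : ∃ l' : Fin k, b l' = (⟨i, hi2⟩ : Fin n)
          · obtain ⟨l', hl'⟩ := hy
            have hlv' : (b l' : ℕ) = i := congrArg Fin.val hl'
            by_cases hl2 : (l' : ℕ) + 1 < k
            · have eqY : σ (⟨i, hi2⟩ : Fin n) = b ⟨(l' : ℕ) + 1, hl2⟩ := by
                rw [← hl']; exact hcyc (l' : ℕ) hl2
              rw [eqY] at hdv
              have := hble ⟨0, h0k⟩ ⟨(l' : ℕ) + 1, hl2⟩ (show (0:ℕ) ≤ (l':ℕ)+1 by omega)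
              omega
            · have hv : l' = ⟨k - 1, hk1⟩ := Fin.ext (show (l':ℕ) = k - 1 by have := l'.isLt; omega)
              rw [hv] at hlv'
              rw [hlK] at hlv
              omega
          · push_neg at hy
            have eqY := hfix _ hy
            rw [eqY] at hdv
            have hdv' : i < (b ⟨0, h0k⟩ : ℕ) := hdv
            have := hble ⟨0, h0k⟩ l (show (0:ℕ) ≤ (l:ℕ) by omega)
            omega
      · push_neg at hx
        have eqX := hfix _ hx
        rw [eqX] at hdv
        have hdv' : ((σ (⟨i, hi2⟩ : Fin n)) : ℕ) < i - 1 := hdv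
        by_cases hy : ∃ l' : Fin k, b l' = (⟨i, hi2⟩ : Fin n)
        · obtain ⟨l', hl'⟩ := hy
          have hlv' : (b l' : ℕ) = i := congrArg Fin.val hl'
          by_cases hl2 : (l' : ℕ) + 1 < k
          · exfalso
            have eqY : σ (⟨i, hi2⟩ : Fin n) = b ⟨(l' : ℕ) + 1, hl2⟩ := by
              rw [← hl']; exact hcyc (l' : ℕ) hl2
            rw [eqY] at hdv'
            have := hb l' ⟨(l' : ℕ) + 1, hl2⟩ (show (l':ℕ) < (l':ℕ)+1 by omega)
            omega
          · right
            show i = (b ⟨k - 1, hk1⟩ : ℕ)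
            have hv : l' = ⟨k - 1, hk1⟩ := Fin.ext (show (l':ℕ) = k - 1 by have := l'.isLt; omega)
            rw [← hv]
            omega
        · exfalso
          push_neg at hy
          have eqY := hfix _ hy
          rw [eqY] at hdv'
          have : (i : ℕ) < i - 1 := hdv'
          omega
    · rintro (⟨l, h, hi, hgap⟩ | hi)
      · have hi2 : i < n := by
          have := (b ⟨l + 1, h⟩).isLt
          omega
        refine ⟨by omega, hi2, ?_⟩
        have eqX : σ (⟨i - 1, Nat.lt_of_le_of_lt (Nat.sub_le i 1) hi2⟩ : Fin n)
            = b ⟨l + 1, h⟩ := by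
          have hx : (⟨i - 1, Nat.lt_of_le_of_lt (Nat.sub_le i 1) hi2⟩ : Fin n)
              = b ⟨l, Nat.lt_of_succ_lt h⟩ :=
            Fin.ext (show i - 1 = (b ⟨l, Nat.lt_of_succ_lt h⟩ : ℕ) by omega)
          rw [hx]
          exact hcyc l h
        have eqY : σ (⟨i, hi2⟩ : Fin n) = ⟨i, hi2⟩ := by
          apply hfix
          intro l'' hc
          have hv : (b l'' : ℕ) = i := congrArg Fin.val hc
          have h2 : (l : ℕ) < (l'' : ℕ) := by
            by_contra hc2
            have := hble l'' ⟨l, Nat.lt_of_succ_lt h⟩ (show (l'':ℕ) ≤ l by omega)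
            omega
          have h3 : (b ⟨l + 1, h⟩ : ℕ) ≤ (b l'' : ℕ) :=
            hble _ _ (show l + 1 ≤ (l'':ℕ) by omega)
          omega
        rw [eqY, eqX, Fin.lt_def]
        show i < (b ⟨l + 1, h⟩ : ℕ)
        omega
      · have hi' : i = (b ⟨k - 1, hk1⟩ : ℕ) := hi
        have hb0K : (b ⟨0, h0k⟩ : ℕ) < (b ⟨k - 1, hk1⟩ : ℕ) :=
          hb _ _ (show (0:ℕ) < k - 1 by omega)
        have hi2 : i < n := by have := (b ⟨k - 1, hk1⟩).isLt; omega
        refine ⟨by omega, hi2, ?_⟩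
        have eqY : σ (⟨i, hi2⟩ : Fin n) = b ⟨0, h0k⟩ := by
          have hv : (⟨i, hi2⟩ : Fin n) = b ⟨k - 1, hk1⟩ :=
            Fin.ext (show i = (b ⟨k - 1, hk1⟩ : ℕ) from hi')
          rw [hv]
          exact hlast
        rw [eqY]
        by_cases hx : ∃ l : Fin k,
            b l = (⟨i - 1, Nat.lt_of_le_of_lt (Nat.sub_le i 1) hi2⟩ : Fin n)
        · obtain ⟨l, hl⟩ := hx
          have hlv : (b l : ℕ) = i - 1 := congrArg Fin.val hl
          have hlk : (l : ℕ) < k - 1 := by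
            by_contra hc
            have hv : l = ⟨k - 1, hk1⟩ := Fin.ext (show (l:ℕ) = k - 1 by have := l.isLt; omega)
            rw [hv] at hlv
            omega
          have hl1 : (l : ℕ) + 1 < k := by omega
          have eqX : σ (⟨i - 1, Nat.lt_of_le_of_lt (Nat.sub_le i 1) hi2⟩ : Fin n)
              = b ⟨(l : ℕ) + 1, hl1⟩ := by
            rw [← hl]; exact hcyc (l : ℕ) hl1
          rw [eqX, Fin.lt_def]
          exact hb _ _ (show (0:ℕ) < (l:ℕ) + 1 by omega)
        · push_neg at hx
          have eqX := hfix _ hx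
          rw [eqX, Fin.lt_def]
          show (b ⟨0, h0k⟩ : ℕ) < i - 1
          have hne : (b ⟨0, h0k⟩ : ℕ) ≠ i - 1 := by
            intro hc
            exact hx ⟨0, h0k⟩ (Fin.ext (show (b ⟨0, h0k⟩ : ℕ) = i - 1 from hc))
          omega
  · -- descents of σ⁻¹
    intro i
    rw [hmem]
    constructor
    · rintro ⟨hi1, hi2, hd⟩
      have hdv : ((σ⁻¹ (⟨i, hi2⟩ : Fin n)) : ℕ) <
          ((σ⁻¹ (⟨i - 1, Nat.lt_of_le_of_lt (Nat.sub_le i 1) hi2⟩ : Fin n)) : ℕ) := hd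
      by_cases hy : ∃ l' : Fin k, b l' = (⟨i, hi2⟩ : Fin n)
      · obtain ⟨l', hl'⟩ := hy
        have hlv' : (b l' : ℕ) = i := congrArg Fin.val hl'
        by_cases hl0 : (l' : ℕ) = 0
        · exfalso
          have hy0 : l' = ⟨0, h0k⟩ := Fin.ext hl0
          rw [hy0] at hlv'
          have eqY : σ⁻¹ (⟨i, hi2⟩ : Fin n) = b ⟨k - 1, hk1⟩ := by
            rw [← hl', hy0]; exact hlast'
          rw [eqY] at hdv
          have eqX : σ⁻¹ (⟨i - 1, Nat.lt_of_le_of_lt (Nat.sub_le i 1) hi2⟩ : Fin n)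
              = (⟨i - 1, Nat.lt_of_le_of_lt (Nat.sub_le i 1) hi2⟩ : Fin n) := by
            apply hfix'
            intro l'' hc
            have h1 : (b l'' : ℕ) = i - 1 := congrArg Fin.val hc
            have h2 : (b ⟨0, h0k⟩ : ℕ) ≤ (b l'' : ℕ) :=
              hble _ _ (show (0:ℕ) ≤ (l'':ℕ) by omega)
            omega
          rw [eqX] at hdv
          have hdv' : (b ⟨k - 1, hk1⟩ : ℕ) < i - 1 := hdv
          have := hble ⟨0, h0k⟩ ⟨k - 1, hk1⟩ (show (0:ℕ) ≤ k - 1 by omega)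
          omega
        · have hl'1 : (l' : ℕ) - 1 + 1 < k := by have := l'.isLt; omega
          have eqY : σ⁻¹ (⟨i, hi2⟩ : Fin n)
              = b ⟨(l' : ℕ) - 1, Nat.lt_of_succ_lt hl'1⟩ := by
            rw [← hl']
            have hv : l' = ⟨(l' : ℕ) - 1 + 1, hl'1⟩ :=
              Fin.ext (show (l':ℕ) = (l':ℕ) - 1 + 1 by omega)
            exact (congrArg (⇑σ⁻¹) (congrArg b hv)).trans (hcyc' ((l' : ℕ) - 1) hl'1)
          rw [eqY] at hdv
          by_cases hx : ∃ l'' : Fin k,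
              b l'' = (⟨i - 1, Nat.lt_of_le_of_lt (Nat.sub_le i 1) hi2⟩ : Fin n)
          · obtain ⟨l'', hl''⟩ := hx
            have hlv'' : (b l'' : ℕ) = i - 1 := congrArg Fin.val hl''
            have hlt : (l'' : ℕ) < (l' : ℕ) := by
              by_contra hc
              have := hble l' l'' (by omega)
              omega
            have hge : (b ⟨(l' : ℕ) - 1, Nat.lt_of_succ_lt hl'1⟩ : ℕ) < (b l' : ℕ) :=
              hb _ _ (show (l':ℕ) - 1 < (l':ℕ) by omega)
            have hle2 : (b l'' : ℕ) ≤ (b ⟨(l' : ℕ) - 1, Nat.lt_of_succ_lt hl'1⟩ : ℕ) :=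
              hble _ _ (show (l'':ℕ) ≤ (l':ℕ) - 1 by omega)
            by_cases hx0 : (l'' : ℕ) = 0
            · right
              have hv : l'' = ⟨0, h0k⟩ := Fin.ext hx0
              rw [hv] at hlv''
              show i = (b ⟨0, h0k⟩ : ℕ) + 1
              omega
            · exfalso
              have hl''1 : (l'' : ℕ) - 1 + 1 < k := by have := l''.isLt; omega
              have eqX : σ⁻¹ (⟨i - 1, Nat.lt_of_le_of_lt (Nat.sub_le i 1) hi2⟩ : Fin n)
                  = b ⟨(l'' : ℕ) - 1, Nat.lt_of_succ_lt hl''1⟩ := by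
                rw [← hl'']
                have hv : l'' = ⟨(l'' : ℕ) - 1 + 1, hl''1⟩ :=
                  Fin.ext (show (l'':ℕ) = (l'':ℕ) - 1 + 1 by omega)
                exact (congrArg (⇑σ⁻¹) (congrArg b hv)).trans (hcyc' ((l'' : ℕ) - 1) hl''1)
              rw [eqX] at hdv
              -- hdv : b⟨l'-1⟩ < b⟨l''-1⟩, but l''-1 < l'-1
              have hlees : (b l'' : ℕ) + 1 ≤ (b ⟨(l' : ℕ) - 1, Nat.lt_of_succ_lt hl'1⟩ : ℕ) + 1 := by omega
              have h5 : (b ⟨(l'' : ℕ) - 1, Nat.lt_of_succ_lt hl''1⟩ : ℕ) <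
                  (b ⟨(l' : ℕ) - 1, Nat.lt_of_succ_lt hl'1⟩ : ℕ) :=
                hb _ _ (show (l'':ℕ) - 1 < (l':ℕ) - 1 by omega)
              omega
          · push_neg at hx
            have eqX := hfix' _ hx
            rw [eqX] at hdv
            have hdv' : (b ⟨(l' : ℕ) - 1, Nat.lt_of_succ_lt hl'1⟩ : ℕ) < i - 1 := hdv
            left
            refine ⟨(l' : ℕ) - 1, hl'1, ?_, ?_⟩
            · show i = (b ⟨(l' : ℕ) - 1 + 1, hl'1⟩ : ℕ)
              have hv : l' = ⟨(l' : ℕ) - 1 + 1, hl'1⟩ :=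
                Fin.ext (show (l':ℕ) = (l':ℕ) - 1 + 1 by omega)
              rw [← hv]
              omega
            · show (b ⟨(l' : ℕ) - 1, Nat.lt_of_succ_lt hl'1⟩ : ℕ) + 1 <
                  (b ⟨(l' : ℕ) - 1 + 1, hl'1⟩ : ℕ)
              have hv : l' = ⟨(l' : ℕ) - 1 + 1, hl'1⟩ :=
                Fin.ext (show (l':ℕ) = (l':ℕ) - 1 + 1 by omega)
              rw [← hv]
              omega
      · push_neg at hy
        have eqY := hfix' _ hy
        rw [eqY] at hdv
        have hdv1 : i < ((σ⁻¹ (⟨i - 1, Nat.lt_of_le_of_lt (Nat.sub_le i 1) hi2⟩ : Fin n)) : ℕ) := hdv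
        by_cases hx : ∃ l'' : Fin k,
            b l'' = (⟨i - 1, Nat.lt_of_le_of_lt (Nat.sub_le i 1) hi2⟩ : Fin n)
        · obtain ⟨l'', hl''⟩ := hx
          have hlv'' : (b l'' : ℕ) = i - 1 := congrArg Fin.val hl''
          by_cases hx0 : (l'' : ℕ) = 0
          · right
            have hv : l'' = ⟨0, h0k⟩ := Fin.ext hx0
            rw [hv] at hlv''
            show i = (b ⟨0, h0k⟩ : ℕ) + 1
            omega
          · exfalso
            have hl''1 : (l'' : ℕ) - 1 + 1 < k := by have := l''.isLt; omega
            have eqX : σ⁻¹ (⟨i - 1, Nat.lt_of_le_of_lt (Nat.sub_le i 1) hi2⟩ : Fin n)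
                = b ⟨(l'' : ℕ) - 1, Nat.lt_of_succ_lt hl''1⟩ := by
              rw [← hl'']
              have hv : l'' = ⟨(l'' : ℕ) - 1 + 1, hl''1⟩ :=
                Fin.ext (show (l'':ℕ) = (l'':ℕ) - 1 + 1 by omega)
              exact (congrArg (⇑σ⁻¹) (congrArg b hv)).trans (hcyc' ((l'' : ℕ) - 1) hl''1)
            rw [eqX] at hdv1
            have := hb ⟨(l'' : ℕ) - 1, Nat.lt_of_succ_lt hl''1⟩ l''
              (show (l'':ℕ) - 1 < (l'':ℕ) by omega)
            omega
        · exfalso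
          push_neg at hx
          have eqX := hfix' _ hx
          rw [eqX] at hdv1
          have : i < i - 1 := hdv1
          omega
    · rintro (⟨l, h, hi, hgap⟩ | hi)
      · have hi2 : i < n := by have := (b ⟨l + 1, h⟩).isLt; omega
        have hi1 : 1 ≤ i := by
          have := hgap
          omega
        refine ⟨hi1, hi2, ?_⟩
        have eqY : σ⁻¹ (⟨i, hi2⟩ : Fin n) = b ⟨l, Nat.lt_of_succ_lt h⟩ := by
          have hv : (⟨i, hi2⟩ : Fin n) = b ⟨l + 1, h⟩ :=
            Fin.ext (show i = (b ⟨l + 1, h⟩ : ℕ) from hi)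
          rw [hv]
          exact hcyc' l h
        have eqX : σ⁻¹ (⟨i - 1, Nat.lt_of_le_of_lt (Nat.sub_le i 1) hi2⟩ : Fin n)
            = (⟨i - 1, Nat.lt_of_le_of_lt (Nat.sub_le i 1) hi2⟩ : Fin n) := by
          apply hfix'
          intro l'' hc
          have h1 : (b l'' : ℕ) = i - 1 := congrArg Fin.val hc
          have h2 : (l : ℕ) < (l'' : ℕ) := by
            by_contra hc2
            have := hble l'' ⟨l, Nat.lt_of_succ_lt h⟩ (show (l'':ℕ) ≤ l by omega)
            omega
          have h3 : (b ⟨l + 1, h⟩ : ℕ) ≤ (b l'' : ℕ) :=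
            hble _ _ (show l + 1 ≤ (l'':ℕ) by omega)
          omega
        rw [eqY, eqX, Fin.lt_def]
        show (b ⟨l, Nat.lt_of_succ_lt h⟩ : ℕ) < i - 1
        omega
      · have hi' : i = (b ⟨0, h0k⟩ : ℕ) + 1 := hi
        have hbK : (b ⟨0, h0k⟩ : ℕ) < (b ⟨k - 1, hk1⟩ : ℕ) :=
          hb _ _ (show (0:ℕ) < k - 1 by omega)
        have hi2 : i < n := by have := (b ⟨k - 1, hk1⟩).isLt; omega
        refine ⟨by omega, hi2, ?_⟩
        have eqX : σ⁻¹ (⟨i - 1, Nat.lt_of_le_of_lt (Nat.sub_le i 1) hi2⟩ : Fin n)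
            = b ⟨k - 1, hk1⟩ := by
          have hv : (⟨i - 1, Nat.lt_of_le_of_lt (Nat.sub_le i 1) hi2⟩ : Fin n)
              = b ⟨0, h0k⟩ :=
            Fin.ext (show i - 1 = (b ⟨0, h0k⟩ : ℕ) by omega)
          rw [hv]
          exact hlast'
        rw [eqX]
        by_cases hy : ∃ l' : Fin k, b l' = (⟨i, hi2⟩ : Fin n)
        · obtain ⟨l', hl'⟩ := hy
          have hlv' : (b l' : ℕ) = i := congrArg Fin.val hl'
          have hl0 : (l' : ℕ) ≠ 0 := by
            intro hc
            have hv : l' = ⟨0, h0k⟩ := Fin.ext hc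
            rw [hv] at hlv'
            omega
          have hl'1 : (l' : ℕ) - 1 + 1 < k := by have := l'.isLt; omega
          have eqY : σ⁻¹ (⟨i, hi2⟩ : Fin n)
              = b ⟨(l' : ℕ) - 1, Nat.lt_of_succ_lt hl'1⟩ := by
            rw [← hl']
            have hv : l' = ⟨(l' : ℕ) - 1 + 1, hl'1⟩ :=
              Fin.ext (show (l':ℕ) = (l':ℕ) - 1 + 1 by omega)
            exact (congrArg (⇑σ⁻¹) (congrArg b hv)).trans (hcyc' ((l' : ℕ) - 1) hl'1)
          rw [eqY, Fin.lt_def]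
          exact hb _ _ (show (l':ℕ) - 1 < k - 1 by have := l'.isLt; omega)
        · push_neg at hy
          have eqY := hfix' _ hy
          rw [eqY, Fin.lt_def]
          show i < (b ⟨k - 1, hk1⟩ : ℕ)
          have hne : (b ⟨k - 1, hk1⟩ : ℕ) ≠ i := by
            intro hc
            exact hy ⟨k - 1, hk1⟩ (Fin.ext (show (b ⟨k - 1, hk1⟩ : ℕ) = i from hc))
          omega

end Stmt
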